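/- Suppose a_{j+1}/a_j ≥ A/B > 1 for all j ≥ j₀ and m_j a_j^{−4} → 0 as j → ∞. Then lim_{j→∞} √m_j ( (I₀(a_{j+1}^{−1}) − I₀(a_{j+2}^{−1})) / (a_{j+1}^{−2} − a_{j+2}^{−2}) − 2α s₀^{−4α−2} ∫_ℝ η² |ψ̂(η)|² dη ) = 0, where I₀(x) := ∫_ℝ |ψ̂(η)|² h(xη)/(s₀² − x²η²)^{2α} dη. -/

import Mathlib

open MeasureTheory Filter Topology

lemma mvt_zero {s : Set ℝ} (hs : Convex ℝ s) (h0s : (0:ℝ) ∈ s) {f f' : ℝ → ℝ}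
    (hf : ∀ x ∈ s, HasDerivAt f (f' x) x) (hf0 : f 0 = 0) {c : ℝ}
    (hb : ∀ x ∈ s, |f' x| ≤ c) : ∀ u ∈ s, |f u| ≤ c * |u| := by
  intro u hu
  have := Convex.norm_image_sub_le_of_norm_hasDerivWithin_le
    (fun x hx => (hf x hx).hasDerivWithinAt) hb hs h0s hu
  simpa [hf0, Real.norm_eq_abs] using this

lemma hTaylor {h : ℝ → ℝ} (hSmooth : ContDiff ℝ 4 h) (h0 : h 0 = 1)
    (h1 : iteratedDeriv 1 h 0 = 0) (h2 : iteratedDeriv 2 h 0 = 0)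
    (h3 : iteratedDeriv 3 h 0 = 0)
    {M : ℝ} {u : ℝ} (hM : ∀ v ∈ Set.Icc (-|u|) |u|, |iteratedDeriv 4 h v| ≤ M) :
    |h u - 1| ≤ M * u ^ 4 := by
  set s : Set ℝ := Set.Icc (-|u|) |u| with hsdef
  have hconv : Convex ℝ s := convex_Icc _ _
  have h0s : (0:ℝ) ∈ s := by constructor <;> simp [abs_nonneg, neg_nonpos]
  have hus : u ∈ s := by
    constructor
    · exact neg_abs_le u
    · exact le_abs_self u
  have hMnn : 0 ≤ M := le_trans (abs_nonneg _) (hM 0 h0s)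
  have hd : ∀ n : ℕ, n < 4 → ∀ x : ℝ,
      HasDerivAt (iteratedDeriv n h) (iteratedDeriv (n+1) h x) x := by
    intro n hn x
    have hdiff : Differentiable ℝ (iteratedDeriv n h) :=
      hSmooth.differentiable_iteratedDeriv n (by exact_mod_cast hn)
    have := (hdiff x).hasDerivAt
    rwa [iteratedDeriv_succ]
  have b3 : ∀ v ∈ s, |iteratedDeriv 3 h v| ≤ M * |u| := by
    intro v hv
    have := mvt_zero hconv h0s (fun x hx => hd 3 (by norm_num) x) h3 hM v hv
    refine this.trans ?_
    have hvu : |v| ≤ |u| := abs_le.2 ⟨hv.1, hv.2⟩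
    exact mul_le_mul_of_nonneg_left hvu hMnn
  have b2 : ∀ v ∈ s, |iteratedDeriv 2 h v| ≤ M * |u| * |v| :=
    mvt_zero hconv h0s (fun x hx => hd 2 (by norm_num) x) h2 b3
  have b2' : ∀ v ∈ s, |iteratedDeriv 2 h v| ≤ M * |u| * |u| := by
    intro v hv
    refine (b2 v hv).trans ?_
    have hvu : |v| ≤ |u| := abs_le.2 ⟨hv.1, hv.2⟩
    exact mul_le_mul_of_nonneg_left hvu (by positivity)
  have b1 : ∀ v ∈ s, |iteratedDeriv 1 h v| ≤ M * |u| * |u| * |v| :=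
    mvt_zero hconv h0s (fun x hx => hd 1 (by norm_num) x) h1 b2'
  have b1' : ∀ v ∈ s, |iteratedDeriv 1 h v| ≤ M * |u| * |u| * |u| := by
    intro v hv
    refine (b1 v hv).trans ?_
    have hvu : |v| ≤ |u| := abs_le.2 ⟨hv.1, hv.2⟩
    exact mul_le_mul_of_nonneg_left hvu (by positivity)
  have b0 : ∀ v ∈ s, |h v - 1| ≤ M * |u| * |u| * |u| * |v| := by
    have hf : ∀ x ∈ s, HasDerivAt (fun v => h v - 1) (iteratedDeriv 1 h x) x := by
      intro x _
      simpa [iteratedDeriv_one] using ((hSmooth.differentiable (by norm_num) x).hasDerivAt.sub_const 1)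
    exact mvt_zero hconv h0s hf (by simp [h0]) b1'
  have := b0 u hus
  refine this.trans (le_of_eq ?_)
  have habs : |u| * |u| = u * u := abs_mul_abs_self u
  have : M * abs u * abs u * abs u * abs u = M * ((abs u * abs u) * (abs u * abs u)) := by ring
  rw [this, habs]; ring

lemma phiTaylor {s₀ α δ b : ℝ} (hs₀ : 1 < s₀) (hα : 0 < α) (hb : 0 ≤ b)
    (hδ : 0 ≤ δ) (hδb : δ * b ≤ s₀^2 - 1) :
    ∀ y ∈ Set.Icc (0:ℝ) δ,
      |(s₀^2 - y*b) ^ (-(2*α)) - (s₀^2:ℝ) ^ (-(2*α)) - y * (2*α*b*(s₀^2:ℝ)^(-(2*α)-1))|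
        ≤ (2*α*(2*α+1)*b^2) * y^2 := by
  have hbase : ∀ y ∈ Set.Icc (0:ℝ) δ, (1:ℝ) ≤ s₀^2 - y*b := by
    intro y hy
    have : y * b ≤ δ * b := mul_le_mul_of_nonneg_right hy.2 hb
    nlinarith [hy.1]
  have hder1 : ∀ y : ℝ, (1:ℝ) ≤ s₀^2 - y*b →
      HasDerivAt (fun z => (s₀^2 - z*b) ^ (-(2*α)))
        ((2*α*b) * (s₀^2 - y*b) ^ (-(2*α)-1)) y := by
    intro y hy
    have hpos : s₀^2 - y*b ≠ 0 := by linarith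
    have hin : HasDerivAt (fun z : ℝ => s₀^2 - z*b) (-b) y := by
      simpa using ((hasDerivAt_id y).mul_const b).const_sub (s₀^2)
    have hout := Real.hasDerivAt_rpow_const (x := s₀^2 - y*b) (p := -(2*α)) (Or.inl hpos)
    have := hout.comp y hin
    convert this using 1
    · rfl
    · rfl
    · rfl
    ring
  have hder2 : ∀ y : ℝ, (1:ℝ) ≤ s₀^2 - y*b →
      HasDerivAt (fun z => (2*α*b) * (s₀^2 - z*b) ^ (-(2*α)-1))
        ((2*α*(2*α+1)*b^2) * (s₀^2 - y*b) ^ (-(2*α)-1-1)) y := by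
    intro y hy
    have hpos : s₀^2 - y*b ≠ 0 := by linarith
    have hin : HasDerivAt (fun z : ℝ => s₀^2 - z*b) (-b) y := by
      simpa using ((hasDerivAt_id y).mul_const b).const_sub (s₀^2)
    have hout := Real.hasDerivAt_rpow_const (x := s₀^2 - y*b) (p := -(2*α)-1) (Or.inl hpos)
    have := (hout.comp y hin).const_mul (2*α*b)
    convert this using 1
    · rfl
    · rfl
    · rfl
    ring
  intro Y hY
  set c₂ : ℝ := 2*α*(2*α+1)*b^2 with hc₂
  have hc₂nn : 0 ≤ c₂ := by positivity
  have hsub : Set.Icc (0:ℝ) Y ⊆ Set.Icc (0:ℝ) δ :=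
    Set.Icc_subset_Icc le_rfl hY.2
  set F : ℝ → ℝ := fun y => (s₀^2 - y*b) ^ (-(2*α)) - (s₀^2:ℝ) ^ (-(2*α))
      - y * (2*α*b*(s₀^2:ℝ)^(-(2*α)-1)) with hF
  set F' : ℝ → ℝ := fun y => (2*α*b) * (s₀^2 - y*b) ^ (-(2*α)-1)
      - (2*α*b*(s₀^2:ℝ)^(-(2*α)-1)) with hF'
  have h0mem : (0:ℝ) ∈ Set.Icc (0:ℝ) Y := by
    constructor <;> [rfl; exact hY.1]
  have hFder : ∀ y ∈ Set.Icc (0:ℝ) Y, HasDerivAt F (F' y) y := by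
    intro y hy
    have hlin : HasDerivAt (fun z : ℝ => z * (2*α*b*(s₀^2:ℝ)^(-(2*α)-1)))
        (2*α*b*(s₀^2:ℝ)^(-(2*α)-1)) y := by
      simpa using (hasDerivAt_id y).mul_const (2*α*b*(s₀^2:ℝ)^(-(2*α)-1))
    exact ((hder1 y (hbase y (hsub hy))).sub_const _).sub hlin
  have hF'der : ∀ y ∈ Set.Icc (0:ℝ) Y,
      HasDerivAt F' ((2*α*(2*α+1)*b^2) * (s₀^2 - y*b) ^ (-(2*α)-1-1)) y := by
    intro y hy
    exact (hder2 y (hbase y (hsub hy))).sub_const _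
  have hF'0 : F' 0 = 0 := by simp [hF']
  have hF0 : F 0 = 0 := by simp [hF]
  have hbnd2 : ∀ y ∈ Set.Icc (0:ℝ) Y,
      |(2*α*(2*α+1)*b^2) * (s₀^2 - y*b) ^ (-(2*α)-1-1)| ≤ c₂ := by
    intro y hy
    have h1 : (1:ℝ) ≤ s₀^2 - y*b := hbase y (hsub hy)
    have hrp : (s₀^2 - y*b) ^ (-(2*α)-1-1) ≤ 1 :=
      Real.rpow_le_one_of_one_le_of_nonpos h1 (by linarith)
    have hrpnn : (0:ℝ) ≤ (s₀^2 - y*b) ^ (-(2*α)-1-1) :=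
      Real.rpow_nonneg (by linarith) _
    rw [abs_of_nonneg (by positivity)]
    calc 2*α*(2*α+1)*b^2 * (s₀^2 - y*b) ^ (-(2*α)-1-1)
        ≤ 2*α*(2*α+1)*b^2 * 1 := by
          exact mul_le_mul_of_nonneg_left hrp (by positivity)
      _ = c₂ := by rw [hc₂]; ring
  have hbndF' : ∀ y ∈ Set.Icc (0:ℝ) Y, |F' y| ≤ c₂ * Y := by
    intro y hy
    have := mvt_zero (convex_Icc 0 Y) h0mem hF'der hF'0 hbnd2 y hy
    refine this.trans ?_
    have : |y| ≤ Y := by rw [abs_of_nonneg hy.1]; exact hy.2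
    exact mul_le_mul_of_nonneg_left this hc₂nn
  have := mvt_zero (convex_Icc 0 Y) h0mem hFder hF0 hbndF' Y
    (by constructor <;> [exact hY.1; rfl])
  refine this.trans (le_of_eq ?_)
  rw [abs_of_nonneg hY.1]; ring

lemma psiHat_cont {ψ psiHat : ℝ → ℝ} (hψ : Integrable ψ)
    (hFour : ∀ l : ℝ, (psiHat l : ℂ) =
      ∫ t : ℝ, Complex.exp (-(l * t) * Complex.I) * (ψ t : ℂ)) :
    Continuous psiHat := by
  have hc : Continuous fun l : ℝ =>
      ∫ t : ℝ, Complex.exp (-(l * t) * Complex.I) * (ψ t : ℂ) := by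
    apply continuous_of_dominated (bound := fun t => |ψ t|)
    · intro l
      exact ((Complex.continuous_exp.comp (by continuity)).aestronglyMeasurable).mul
        (Complex.continuous_ofReal.comp_aestronglyMeasurable hψ.1)
    · intro l
      filter_upwards with t
      have h1 : ‖Complex.exp (-(l * t) * Complex.I)‖ = 1 := by
        rw [Complex.norm_exp]
        simp
      rw [norm_mul, h1, one_mul, Complex.norm_real, Real.norm_eq_abs]
    · exact hψ.abs
    · filter_upwards with t
      exact (Complex.continuous_exp.comp (by continuity)).mul continuous_const
  have heq : psiHat = fun l : ℝ =>
      (∫ t : ℝ, Complex.exp (-(l * t) * Complex.I) * (ψ t : ℂ)).re := by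
    funext l
    rw [← hFour l, Complex.ofReal_re]
  rw [heq]
  exact Complex.continuous_re.comp hc

set_option maxHeartbeats 1600000 in
/-- If `a_{j+1}/a_j ≥ A/B > 1` for `j ≥ j₀` and `m_j a_j^{−4} → 0`, then
`√m_j ((I₀(a_{j+1}⁻¹) − I₀(a_{j+2}⁻¹))/(a_{j+1}^{−2} − a_{j+2}^{−2})
   − 2α s₀^{−4α−2} ∫ η²|ψ̂(η)|² dη) → 0`,
where `I₀(x) = ∫ |ψ̂(η)|² h(xη)/(s₀² − x²η²)^{2α} dη`. -/
theorem increment_bias_negligible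
    (A B s₀ α : ℝ) (hA : 0 < A) (hB : 0 < B) (hBA : B < A)
    (hs₀ : 1 < s₀) (hα : α ∈ Set.Ioo (0:ℝ) (1/2))
    (h : ℝ → ℝ) (hEven : ∀ x, h (-x) = h x) (hNonneg : ∀ x, 0 ≤ h x)
    (hBdd : ∃ C : ℝ, ∀ x, h x ≤ C) (hSmooth : ContDiff ℝ 4 h)
    (h0 : h 0 = 1) (hder0 : ∀ i ∈ Finset.Icc 1 4, iteratedDeriv i h 0 = 0)
    (ψ : ℝ → ℝ) (hψ : Integrable ψ)
    (psiHat : ℝ → ℝ)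
    (hFour : ∀ l : ℝ, (psiHat l : ℂ) =
      ∫ t : ℝ, Complex.exp (-(l * t) * Complex.I) * (ψ t : ℂ))
    (hSupp : ∀ l : ℝ, psiHat l ≠ 0 → l ∈ Set.Icc (-A) A)
    (hBV : BoundedVariationOn psiHat (Set.Icc (-A) A))
    (a : ℕ → ℝ) (hapos : ∀ j, 0 < a j) (haMono : StrictMono a)
    (haTop : Tendsto a atTop atTop)
    (m : ℕ → ℕ) (hmpos : ∀ j, 0 < m j) (hmMono : Monotone m)
    (hmTop : Tendsto m atTop atTop)
    (j₀ : ℕ) (hratio : ∀ j, j₀ ≤ j → A / B ≤ a (j + 1) / a j)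
    (hrate : Tendsto (fun j => (m j : ℝ) * (a j) ^ (-(4 : ℝ))) atTop (𝓝 0)) :
    Tendsto (fun j => Real.sqrt (m j) *
        (((∫ η : ℝ, psiHat η ^ 2 * h ((a (j + 1))⁻¹ * η) /
              (s₀ ^ 2 - ((a (j + 1))⁻¹) ^ 2 * η ^ 2) ^ (2 * α)) -
            ∫ η : ℝ, psiHat η ^ 2 * h ((a (j + 2))⁻¹ * η) /
              (s₀ ^ 2 - ((a (j + 2))⁻¹) ^ 2 * η ^ 2) ^ (2 * α)) /
            (((a (j + 1)) ^ 2)⁻¹ - ((a (j + 2)) ^ 2)⁻¹) -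
          2 * α * s₀ ^ (-(4 : ℝ) * α - 2) * ∫ η : ℝ, η ^ 2 * psiHat η ^ 2))
      atTop (𝓝 0) := by
  obtain ⟨hα0, hα2⟩ := hα
  have hs0pos : (0:ℝ) < s₀ := lt_trans one_pos hs₀
  have hs21 : (1:ℝ) < s₀^2 := by nlinarith
  have hcont : Continuous psiHat := psiHat_cont hψ hFour
  have hsupp0 : ∀ η : ℝ, η ∉ Set.Icc (-A) A → psiHat η = 0 := by
    intro η hη; by_contra hne; exact hη (hSupp η hne)
  obtain ⟨Mψ₀, hMψ₀⟩ := (isCompact_Icc (a := -A) (b := A)).exists_bound_of_continuousOn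
    hcont.continuousOn
  set Mψ := max Mψ₀ 0 with hMψdef
  have hMψ : ∀ η, |psiHat η| ≤ Mψ := by
    intro η
    by_cases hη : η ∈ Set.Icc (-A) A
    · exact le_trans (by simpa [Real.norm_eq_abs] using hMψ₀ η hη) (le_max_left _ _)
    · rw [hsupp0 η hη]
      simpa [hMψdef] using le_max_right Mψ₀ 0
  obtain ⟨Ch, hCh⟩ := hBdd
  have hChnn : 0 ≤ Ch := le_trans (hNonneg 0) (hCh 0)
  have int_S : Integrable (fun η : ℝ => psiHat η ^ 2) :=
    (hcont.pow 2).integrable_of_hasCompactSupport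
      (HasCompactSupport.intro (isCompact_Icc (a := -A) (b := A))
        (fun x hx => by simp [hsupp0 x hx]))
  have int_T : Integrable (fun η : ℝ => η ^ 2 * psiHat η ^ 2) :=
    ((continuous_pow 2).mul (hcont.pow 2)).integrable_of_hasCompactSupport
      (HasCompactSupport.intro (isCompact_Icc (a := -A) (b := A))
        (fun x hx => by simp [hsupp0 x hx]))
  set T₂ := ∫ η : ℝ, η ^ 2 * psiHat η ^ 2 with hTdef
  set S := ∫ η : ℝ, psiHat η ^ 2 with hSdef
  have hSnn : 0 ≤ S := integral_nonneg (fun η => sq_nonneg _)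
  set δ := (s₀^2 - 1) / A^2 with hδdef
  have hδpos : 0 < δ := div_pos (by linarith) (by positivity)
  have hδA : δ * A^2 = s₀^2 - 1 := div_mul_cancel₀ _ (by positivity)
  set r := Real.sqrt δ * A with hrdef
  have hrpos : 0 < r := by
    have := Real.sqrt_pos.2 hδpos
    positivity
  have hc4 : Continuous (iteratedDeriv 4 h) := hSmooth.continuous_iteratedDeriv 4 (le_refl _)
  obtain ⟨M₄₀, hM₄₀⟩ := (isCompact_Icc (a := -r) (b := r)).exists_bound_of_continuousOn
    hc4.continuousOn
  set M₄ := max M₄₀ 0 with hM₄def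
  have hM₄ : ∀ v ∈ Set.Icc (-r) r, |iteratedDeriv 4 h v| ≤ M₄ := fun v hv =>
    le_trans (by simpa [Real.norm_eq_abs] using hM₄₀ v hv) (le_max_left _ _)
  have hM₄nn : 0 ≤ M₄ := le_max_right _ _
  have hd1 := hder0 1 (by decide)
  have hd2 := hder0 2 (by decide)
  have hd3 := hder0 3 (by decide)
  set K := M₄ * A^4 + 2*α*(2*α+1)*A^4 with hKdef
  have hKnn : 0 ≤ K := by positivity
  set c₀ : ℝ := (s₀^2:ℝ) ^ (-(2*α)) with hc₀def
  set D : ℝ := 2*α*(s₀^2:ℝ)^(-(2*α)-1) with hDdef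
  -- base bound
  have hbase : ∀ x : ℝ, 0 ≤ x → x^2 ≤ δ → ∀ η : ℝ, |η| ≤ A →
      (1:ℝ) ≤ s₀^2 - x^2*η^2 := by
    intro x hx hx2 η hη
    have hbA : η^2 ≤ A^2 := sq_le_sq' (abs_le.1 hη).1 (abs_le.1 hη).2
    have h1 : x^2*η^2 ≤ δ*A^2 :=
      mul_le_mul hx2 hbA (sq_nonneg η) (le_of_lt hδpos)
    linarith [hδA]
  -- pointwise key estimate
  have key : ∀ x : ℝ, 0 ≤ x → x^2 ≤ δ → ∀ η : ℝ, |η| ≤ A →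
      |h (x*η) / (s₀^2 - x^2*η^2) ^ (2*α) - c₀ - x^2 * (D * η^2)| ≤ K * x^4 := by
    intro x hx hx2 η hη
    have hb : (0:ℝ) ≤ η^2 := sq_nonneg η
    have hbA : η^2 ≤ A^2 := sq_le_sq' (abs_le.1 hη).1 (abs_le.1 hη).2
    have hbase1 : (1:ℝ) ≤ s₀^2 - x^2*η^2 := hbase x hx hx2 η hη
    have hbpos : (0:ℝ) < s₀^2 - x^2*η^2 := by linarith
    have hdiv : h (x*η) / (s₀^2 - x^2*η^2) ^ (2*α)
        = h (x*η) * (s₀^2 - x^2*η^2) ^ (-(2*α)) := by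
      rw [Real.rpow_neg (le_of_lt hbpos), div_eq_mul_inv]
    have hur : |x*η| ≤ r := by
      have hxs : x ≤ Real.sqrt δ := by
        have h2 := Real.sqrt_le_sqrt hx2
        rwa [Real.sqrt_sq hx] at h2
      rw [abs_mul, abs_of_nonneg hx]
      exact mul_le_mul hxs hη (abs_nonneg η) (Real.sqrt_nonneg δ)
    have hT1 : |h (x*η) - 1| ≤ M₄ * (x*η)^4 :=
      hTaylor hSmooth h0 hd1 hd2 hd3 (fun v hv => hM₄ v
        ⟨le_trans (neg_le_neg hur) hv.1, le_trans hv.2 hur⟩)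
    have hδb : δ * η^2 ≤ s₀^2 - 1 := by
      calc δ * η^2 ≤ δ * A^2 := mul_le_mul_of_nonneg_left hbA (le_of_lt hδpos)
        _ = s₀^2 - 1 := hδA
    have hT2 := phiTaylor hs₀ hα0 hb (le_of_lt hδpos) hδb (x^2) ⟨sq_nonneg x, hx2⟩
    have hrpow_le1 : (s₀^2 - x^2*η^2) ^ (-(2*α)) ≤ 1 :=
      Real.rpow_le_one_of_one_le_of_nonpos hbase1 (by linarith)
    have hrpow_nn : (0:ℝ) ≤ (s₀^2 - x^2*η^2) ^ (-(2*α)) :=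
      Real.rpow_nonneg (le_of_lt hbpos) _
    rw [hdiv]
    have hsplit : h (x*η) * (s₀^2 - x^2*η^2) ^ (-(2*α)) - c₀ - x^2 * (D * η^2)
        = (h (x*η) - 1) * (s₀^2 - x^2*η^2) ^ (-(2*α))
          + ((s₀^2 - x^2*η^2) ^ (-(2*α)) - (s₀^2:ℝ) ^ (-(2*α))
            - x^2 * (2*α*η^2*(s₀^2:ℝ)^(-(2*α)-1))) := by
      rw [hc₀def, hDdef]; ring
    rw [hsplit]
    have hη4 : η^4 ≤ A^4 := by
      calc η^4 = (η^2)^2 := by ring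
        _ ≤ (A^2)^2 := pow_le_pow_left₀ hb hbA 2
        _ = A^4 := by ring
    have e1 : |(h (x*η) - 1) * (s₀^2 - x^2*η^2) ^ (-(2*α))| ≤ M₄ * A^4 * x^4 := by
      rw [abs_mul, abs_of_nonneg hrpow_nn]
      calc |h (x*η) - 1| * (s₀^2 - x^2*η^2) ^ (-(2*α))
          ≤ (M₄ * (x*η)^4) * 1 :=
            mul_le_mul hT1 hrpow_le1 hrpow_nn (by positivity)
        _ = M₄ * (x^4 * η^4) := by ring
        _ ≤ M₄ * (x^4 * A^4) := by
            exact mul_le_mul_of_nonneg_left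
              (mul_le_mul_of_nonneg_left hη4 (by positivity)) hM₄nn
        _ = M₄ * A^4 * x^4 := by ring
    have e2 : |(s₀^2 - x^2*η^2) ^ (-(2*α)) - (s₀^2:ℝ) ^ (-(2*α))
        - x^2 * (2*α*η^2*(s₀^2:ℝ)^(-(2*α)-1))| ≤ 2*α*(2*α+1)*A^4 * x^4 := by
      refine le_trans hT2 ?_
      have : (η^2)^2 ≤ A^4 := by
        calc (η^2)^2 ≤ (A^2)^2 := pow_le_pow_left₀ hb hbA 2
          _ = A^4 := by ring
      calc 2*α*(2*α+1)*(η^2)^2 * (x^2)^2 ≤ 2*α*(2*α+1)*A^4 * (x^2)^2 := by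
            apply mul_le_mul_of_nonneg_right _ (by positivity)
            exact mul_le_mul_of_nonneg_left this (by positivity)
        _ = 2*α*(2*α+1)*A^4 * x^4 := by ring
    calc |(h (x*η) - 1) * (s₀^2 - x^2*η^2) ^ (-(2*α))
          + ((s₀^2 - x^2*η^2) ^ (-(2*α)) - (s₀^2:ℝ) ^ (-(2*α))
            - x^2 * (2*α*η^2*(s₀^2:ℝ)^(-(2*α)-1)))|
        ≤ M₄ * A^4 * x^4 + 2*α*(2*α+1)*A^4 * x^4 :=
          le_trans (abs_add_le _ _) (add_le_add e1 e2)
      _ = K * x^4 := by rw [hKdef]; ring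
  -- integrability of the main integrand
  have intq : ∀ x : ℝ, 0 ≤ x → x^2 ≤ δ →
      Integrable (fun η : ℝ => psiHat η ^ 2 * h (x*η) / (s₀^2 - x^2*η^2) ^ (2*α)) := by
    intro x hx hx2
    have hcden : Continuous (fun η : ℝ => (s₀^2 - x^2*η^2) ^ (2*α)) := by
      rw [continuous_iff_continuousAt]
      intro η
      exact (Real.continuousAt_rpow_const _ _ (Or.inr (by positivity))).comp
        (Continuous.continuousAt (by continuity))
    have hmeas : AEStronglyMeasurable
        (fun η : ℝ => psiHat η ^ 2 * h (x*η) / (s₀^2 - x^2*η^2) ^ (2*α)) volume := by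
      apply Measurable.aestronglyMeasurable
      exact ((hcont.pow 2).mul
        (hSmooth.continuous.comp (continuous_const.mul continuous_id))).measurable.div
        hcden.measurable
    refine Integrable.mono'
      (g := Set.indicator (Set.Icc (-A) A) (fun _ => Mψ^2 * Ch)) ?_ hmeas ?_
    · exact (integrable_indicator_iff measurableSet_Icc).2
        (integrableOn_const measure_Icc_lt_top.ne)
    · filter_upwards with η
      by_cases hη : η ∈ Set.Icc (-A) A
      · rw [Set.indicator_of_mem hη]
        have hηA : |η| ≤ A := abs_le.2 ⟨hη.1, hη.2⟩
        have hbase1 : (1:ℝ) ≤ s₀^2 - x^2*η^2 := hbase x hx hx2 η hηA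
        have hden1 : (1:ℝ) ≤ (s₀^2 - x^2*η^2) ^ (2*α) :=
          Real.one_le_rpow hbase1 (by positivity)
        have hnumnn : (0:ℝ) ≤ psiHat η ^ 2 * h (x*η) :=
          mul_nonneg (sq_nonneg _) (hNonneg _)
        rw [Real.norm_eq_abs, abs_div, abs_of_nonneg hnumnn,
          abs_of_nonneg (by linarith)]
        calc psiHat η ^ 2 * h (x*η) / (s₀^2 - x^2*η^2) ^ (2*α)
            ≤ psiHat η ^ 2 * h (x*η) := div_le_self hnumnn hden1
          _ ≤ Mψ^2 * Ch := by
              apply mul_le_mul _ (hCh _) (hNonneg _) (by positivity)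
              calc psiHat η ^ 2 = |psiHat η| ^ 2 := (sq_abs _).symm
                _ ≤ Mψ ^ 2 := by
                    apply pow_le_pow_left₀ (abs_nonneg _) (hMψ η)
      · rw [Set.indicator_of_notMem hη, hsupp0 η hη]
        simp
  -- integral-level estimate
  have est : ∀ x : ℝ, 0 ≤ x → x^2 ≤ δ →
      |(∫ η : ℝ, psiHat η ^ 2 * h (x*η) / (s₀^2 - x^2*η^2) ^ (2*α))
          - c₀ * S - x^2 * (D * T₂)| ≤ K * S * x^4 := by
    intro x hx hx2
    have h1 := intq x hx hx2
    have h2 : Integrable (fun η : ℝ => c₀ * psiHat η ^ 2) := int_S.const_mul _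
    have h3 : Integrable (fun η : ℝ => (x^2 * D) * (η^2 * psiHat η ^ 2)) :=
      int_T.const_mul _
    have hre : (∫ η : ℝ, psiHat η ^ 2 * h (x*η) / (s₀^2 - x^2*η^2) ^ (2*α))
          - c₀ * S - x^2 * (D * T₂)
        = ∫ η : ℝ, (psiHat η ^ 2 * h (x*η) / (s₀^2 - x^2*η^2) ^ (2*α)
            - c₀ * psiHat η ^ 2 - (x^2 * D) * (η^2 * psiHat η ^ 2)) := by
      have h23 : Integrable (fun η : ℝ => c₀ * psiHat η ^ 2
          + (x^2 * D) * (η^2 * psiHat η ^ 2)) := h2.add h3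
      rw [show (fun η : ℝ => psiHat η ^ 2 * h (x*η) / (s₀^2 - x^2*η^2) ^ (2*α)
            - c₀ * psiHat η ^ 2 - (x^2 * D) * (η^2 * psiHat η ^ 2))
          = (fun η : ℝ => psiHat η ^ 2 * h (x*η) / (s₀^2 - x^2*η^2) ^ (2*α)
            - (c₀ * psiHat η ^ 2 + (x^2 * D) * (η^2 * psiHat η ^ 2)))
          from funext (fun η => by ring)]
      rw [integral_sub h1 h23, integral_add h2 h3,
        integral_const_mul, integral_const_mul, ← hSdef, ← hTdef]
      ring
    rw [hre]
    have habs : ∀ η : ℝ,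
        |psiHat η ^ 2 * h (x*η) / (s₀^2 - x^2*η^2) ^ (2*α)
          - c₀ * psiHat η ^ 2 - (x^2 * D) * (η^2 * psiHat η ^ 2)|
          ≤ psiHat η ^ 2 * (K * x^4) := by
      intro η
      by_cases hη : η ∈ Set.Icc (-A) A
      · have hk := key x hx hx2 η (abs_le.2 ⟨hη.1, hη.2⟩)
        have heq2 : psiHat η ^ 2 * h (x*η) / (s₀^2 - x^2*η^2) ^ (2*α)
            - c₀ * psiHat η ^ 2 - (x^2 * D) * (η^2 * psiHat η ^ 2)
            = psiHat η ^ 2 * (h (x*η) / (s₀^2 - x^2*η^2) ^ (2*α)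
              - c₀ - x^2 * (D * η^2)) := by ring
        rw [heq2, abs_mul, abs_of_nonneg (sq_nonneg _)]
        exact mul_le_mul_of_nonneg_left hk (sq_nonneg _)
      · rw [hsupp0 η hη]; simp
    have hint_abs : Integrable (fun η : ℝ =>
        |psiHat η ^ 2 * h (x*η) / (s₀^2 - x^2*η^2) ^ (2*α)
          - c₀ * psiHat η ^ 2 - (x^2 * D) * (η^2 * psiHat η ^ 2)|) :=
      ((h1.sub h2).sub h3).abs
    have hint_bd : Integrable (fun η : ℝ => psiHat η ^ 2 * (K * x^4)) :=
      int_S.mul_const _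
    calc |∫ η : ℝ, (psiHat η ^ 2 * h (x*η) / (s₀^2 - x^2*η^2) ^ (2*α)
            - c₀ * psiHat η ^ 2 - (x^2 * D) * (η^2 * psiHat η ^ 2))|
        ≤ ∫ η : ℝ, |psiHat η ^ 2 * h (x*η) / (s₀^2 - x^2*η^2) ^ (2*α)
            - c₀ * psiHat η ^ 2 - (x^2 * D) * (η^2 * psiHat η ^ 2)| := by
          simpa [Real.norm_eq_abs] using
            norm_integral_le_integral_norm (μ := volume) (f := fun η : ℝ =>
              psiHat η ^ 2 * h (x*η) / (s₀^2 - x^2*η^2) ^ (2*α)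
                - c₀ * psiHat η ^ 2 - (x^2 * D) * (η^2 * psiHat η ^ 2))
      _ ≤ ∫ η : ℝ, psiHat η ^ 2 * (K * x^4) :=
          integral_mono hint_abs hint_bd habs
      _ = K * S * x^4 := by
          rw [integral_mul_const, ← hSdef]; ring
  -- quotient estimate
  set ρ := 1 - (B/A)^2 with hρdef
  have hBA1 : B/A < 1 := (div_lt_one hA).2 hBA
  have hBApos : 0 < B/A := div_pos hB hA
  have hρpos : 0 < ρ := by
    rw [hρdef]
    have := pow_lt_one₀ (le_of_lt hBApos) hBA1 (two_ne_zero)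
    linarith
  have quot : ∀ x₁ x₂ : ℝ, 0 < x₂ → x₂ ≤ (B/A) * x₁ → 0 < x₁ → x₁^2 ≤ δ →
      |((∫ η : ℝ, psiHat η ^ 2 * h (x₁*η) / (s₀^2 - x₁^2*η^2) ^ (2*α)) -
          ∫ η : ℝ, psiHat η ^ 2 * h (x₂*η) / (s₀^2 - x₂^2*η^2) ^ (2*α)) / (x₁^2 - x₂^2)
        - D * T₂| ≤ (2*K*S/ρ) * x₁^2 := by
    intro x₁ x₂ hx₂ hx21 hx₁ hx₁δ
    have hx2lt : x₂ < x₁ := lt_of_le_of_lt hx21 (mul_lt_of_lt_one_left hx₁ hBA1)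
    have hx₂δ : x₂^2 ≤ δ :=
      le_trans (pow_le_pow_left₀ (le_of_lt hx₂) (le_of_lt hx2lt) 2) hx₁δ
    have e1 := est x₁ (le_of_lt hx₁) hx₁δ
    have e2 := est x₂ (le_of_lt hx₂) hx₂δ
    have hx2sq : x₂^2 ≤ (B/A)^2 * x₁^2 := by
      calc x₂^2 ≤ ((B/A)*x₁)^2 := pow_le_pow_left₀ (le_of_lt hx₂) hx21 2
        _ = (B/A)^2 * x₁^2 := by ring
    have hd : ρ * x₁^2 ≤ x₁^2 - x₂^2 := by
      rw [hρdef]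
      nlinarith [hx2sq]
    have hdpos : (0:ℝ) < x₁^2 - x₂^2 :=
      lt_of_lt_of_le (mul_pos hρpos (pow_pos hx₁ 2)) hd
    set I₁ := ∫ η : ℝ, psiHat η ^ 2 * h (x₁*η) / (s₀^2 - x₁^2*η^2) ^ (2*α) with hI₁
    set I₂ := ∫ η : ℝ, psiHat η ^ 2 * h (x₂*η) / (s₀^2 - x₂^2*η^2) ^ (2*α) with hI₂
    have key_eq : (I₁ - I₂) / (x₁^2 - x₂^2) - D * T₂
        = ((I₁ - c₀*S - x₁^2*(D*T₂)) - (I₂ - c₀*S - x₂^2*(D*T₂))) / (x₁^2 - x₂^2) := by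
      field_simp
      ring
    rw [key_eq, abs_div, abs_of_pos hdpos]
    have hnum : |(I₁ - c₀*S - x₁^2*(D*T₂)) - (I₂ - c₀*S - x₂^2*(D*T₂))|
        ≤ 2*K*S*x₁^4 := by
      have h24 : x₂^4 ≤ x₁^4 := pow_le_pow_left₀ (le_of_lt hx₂) (le_of_lt hx2lt) 4
      calc |(I₁ - c₀*S - x₁^2*(D*T₂)) - (I₂ - c₀*S - x₂^2*(D*T₂))|
          ≤ |I₁ - c₀*S - x₁^2*(D*T₂)| + |I₂ - c₀*S - x₂^2*(D*T₂)| := abs_sub _ _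
        _ ≤ K*S*x₁^4 + K*S*x₂^4 := add_le_add e1 e2
        _ ≤ 2*K*S*x₁^4 := by
            have := mul_le_mul_of_nonneg_left h24 (mul_nonneg hKnn hSnn)
            linarith
    calc |(I₁ - c₀*S - x₁^2*(D*T₂)) - (I₂ - c₀*S - x₂^2*(D*T₂))| / (x₁^2 - x₂^2)
        ≤ (2*K*S*x₁^4) / (ρ*x₁^2) :=
          div_le_div₀ (by positivity) hnum (by positivity) hd
      _ = (2*K*S/ρ)*x₁^2 := by
          field_simp
  -- rewrite the rpow constant
  have hidD : 2 * α * s₀ ^ (-(4:ℝ) * α - 2) = D := by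
    rw [hDdef]
    have hexp : (s₀^2:ℝ) ^ (-(2*α)-1) = s₀ ^ (-(4:ℝ)*α - 2) := by
      rw [show ((s₀^2:ℝ)) = s₀ ^ ((2:ℕ):ℝ) from (Real.rpow_natCast s₀ 2).symm,
        ← Real.rpow_mul (le_of_lt hs0pos)]
      congr 1
      push_cast
      ring
    rw [hexp]
  -- limit of the dominating sequence
  have hsq : Tendsto (fun j => Real.sqrt ((m j : ℝ) * (a j) ^ (-(4:ℝ)))) atTop (𝓝 0) := by
    have h0' : Tendsto Real.sqrt (𝓝 0) (𝓝 0) := by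
      simpa using Real.continuous_sqrt.tendsto 0
    exact h0'.comp hrate
  have hdom : Tendsto (fun j => (2*K*S/ρ) * Real.sqrt ((m j : ℝ) * (a j) ^ (-(4:ℝ))))
      atTop (𝓝 0) := by
    simpa using hsq.const_mul (2*K*S/ρ)
  apply squeeze_zero_norm' _ hdom
  have hev1 : ∀ᶠ j : ℕ in atTop, max 1 (Real.sqrt δ)⁻¹ ≤ a j :=
    haTop.eventually_ge_atTop _
  have hev2 : ∀ᶠ j : ℕ in atTop, j₀ ≤ j := eventually_ge_atTop j₀
  filter_upwards [hev1, hev2] with j hj1 hj2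
  have hδs : 0 < Real.sqrt δ := Real.sqrt_pos.2 hδpos
  have ha1 : max 1 (Real.sqrt δ)⁻¹ ≤ a (j+1) :=
    le_trans hj1 (le_of_lt (haMono (Nat.lt_succ_self j)))
  set x₁ := (a (j+1))⁻¹ with hx₁def
  set x₂ := (a (j+2))⁻¹ with hx₂def
  have h1pos := hapos (j+1)
  have h2pos := hapos (j+2)
  have hx₁pos : 0 < x₁ := inv_pos.2 h1pos
  have hx₂pos : 0 < x₂ := inv_pos.2 h2pos
  have hx₁δ : x₁^2 ≤ δ := by
    have hge : (Real.sqrt δ)⁻¹ ≤ a (j+1) := le_trans (le_max_right _ _) ha1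
    have hx₁le : x₁ ≤ Real.sqrt δ := by
      rw [hx₁def, ← inv_inv (Real.sqrt δ)]
      exact inv_anti₀ (inv_pos.2 hδs) hge
    calc x₁^2 ≤ (Real.sqrt δ)^2 := pow_le_pow_left₀ (le_of_lt hx₁pos) hx₁le 2
      _ = δ := Real.sq_sqrt (le_of_lt hδpos)
  have hratio' : x₂ ≤ (B/A) * x₁ := by
    have hAB := hratio (j+1) (le_trans hj2 (Nat.le_succ j))
    rw [div_le_div_iff₀ hB h1pos] at hAB
    have goal' : (1:ℝ)/(a (j+2)) ≤ B/(A * a (j+1)) := by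
      rw [div_le_div_iff₀ h2pos (by positivity)]
      linarith
    calc x₂ = 1/(a (j+2)) := (one_div _).symm
      _ ≤ B/(A * a (j+1)) := goal'
      _ = (B/A) * x₁ := by
          rw [hx₁def, ← one_div, div_mul_div_comm, mul_one]
  have hq := quot x₁ x₂ hx₂pos hratio' hx₁pos hx₁δ
  -- rewrite the statement into the quot form
  have hinv1 : ((a (j+1))^2)⁻¹ = x₁^2 := by rw [hx₁def, inv_pow]
  have hinv2 : ((a (j+2))^2)⁻¹ = x₂^2 := by rw [hx₂def, inv_pow]
  rw [Real.norm_eq_abs, abs_mul, abs_of_nonneg (Real.sqrt_nonneg _), hinv1, hinv2, hidD]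
  have hx₁aj : x₁ ≤ (a j)⁻¹ := by
    rw [hx₁def]
    exact inv_anti₀ (hapos j) (le_of_lt (haMono (Nat.lt_succ_self j)))
  have hCnn : 0 ≤ 2*K*S/ρ := by positivity
  have h2sq : Real.sqrt ((m j : ℝ) * (a j) ^ (-(4:ℝ)))
      = Real.sqrt (m j) * ((a j)⁻¹)^2 := by
    have haj4 : ((a j):ℝ) ^ (-(4:ℝ)) = (((a j)⁻¹)^2)^2 := by
      rw [← pow_mul, inv_pow, Real.rpow_neg (le_of_lt (hapos j)),
        show (4:ℝ) = ((4:ℕ):ℝ) by norm_num, Real.rpow_natCast]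
    rw [haj4, Real.sqrt_mul (Nat.cast_nonneg _), Real.sqrt_sq (by positivity)]
  rw [h2sq]
  calc Real.sqrt (m j) *
      |((∫ η : ℝ, psiHat η ^ 2 * h (x₁ * η) / (s₀^2 - x₁^2*η^2) ^ (2*α)) -
          ∫ η : ℝ, psiHat η ^ 2 * h (x₂ * η) / (s₀^2 - x₂^2*η^2) ^ (2*α)) / (x₁^2 - x₂^2)
        - D * T₂|
      ≤ Real.sqrt (m j) * ((2*K*S/ρ) * x₁^2) :=
        mul_le_mul_of_nonneg_left hq (Real.sqrt_nonneg _)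
    _ ≤ Real.sqrt (m j) * ((2*K*S/ρ) * ((a j)⁻¹)^2) := by
        apply mul_le_mul_of_nonneg_left _ (Real.sqrt_nonneg _)
        exact mul_le_mul_of_nonneg_left
          (pow_le_pow_left₀ (le_of_lt hx₁pos) hx₁aj 2) hCnn
    _ = (2*K*S/ρ) * (Real.sqrt (m j) * ((a j)⁻¹)^2) := by ring
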